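/- Let 0 < X < Y < 1 and g ∈ C²([0,1]) with g(X) > 0, g(Y) > 0, and g'' > 0 on [X,Y]. Then there exists ḡ ∈ C²([0,1]) such that ḡ = g on [0,X] ∪ [Y,1], ḡ ≥ g on [X,Y], ḡ > 0 on [X,Y], and ḡ'' ≥ 0 on [X,Y]. -/

import Mathlib

open Set Filter


open Set Filter

/-- clamp to `[0, δ]` -/
noncomputable def cvxClamp (δ t : ℝ) : ℝ := max 0 (min t δ)

/-- polynomial piece -/
noncomputable def cvxP (δ t : ℝ) : ℝ := δ/2 + t^3/δ^2 - t^4/(2*δ^3)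
noncomputable def cvxP1 (δ t : ℝ) : ℝ := 3*t^2/δ^2 - 2*t^3/δ^3
noncomputable def cvxP2 (δ t : ℝ) : ℝ := 6*t/δ^2 - 6*t^2/δ^3

noncomputable def cvxF (δ t : ℝ) : ℝ := cvxP δ (cvxClamp δ t) + max (t - δ) 0
noncomputable def cvxF1 (δ t : ℝ) : ℝ := cvxP1 δ (cvxClamp δ t)
noncomputable def cvxF2 (δ t : ℝ) : ℝ := cvxP2 δ (cvxClamp δ t)

variable {δ t : ℝ}

lemma cvxClamp_of_nonpos (h : t ≤ 0) (hδ : 0 < δ) : cvxClamp δ t = 0 := by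
  unfold cvxClamp
  rw [max_eq_left]
  exact le_trans (min_le_left _ _) h

lemma cvxClamp_of_mem (h0 : 0 ≤ t) (h1 : t ≤ δ) : cvxClamp δ t = t := by
  unfold cvxClamp
  rw [min_eq_left h1, max_eq_right h0]

lemma cvxClamp_of_ge (h : δ ≤ t) (hδ : 0 < δ) : cvxClamp δ t = δ := by
  unfold cvxClamp
  rw [min_eq_right h, max_eq_right hδ.le]

lemma cvxClamp_nonneg : 0 ≤ cvxClamp δ t := le_max_left _ _

lemma cvxClamp_le (hδ : 0 < δ) : cvxClamp δ t ≤ δ :=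
  max_le hδ.le (min_le_right _ _)

lemma cvxF_of_nonpos (hδ : 0 < δ) (h : t ≤ 0) : cvxF δ t = δ/2 := by
  rw [cvxF, cvxClamp_of_nonpos h hδ, max_eq_right (by linarith)]
  simp [cvxP]

lemma cvxF_of_mem (hδ : 0 < δ) (h0 : 0 ≤ t) (h1 : t ≤ δ) : cvxF δ t = cvxP δ t := by
  rw [cvxF, cvxClamp_of_mem h0 h1, max_eq_right (by linarith)]
  simp

lemma cvxF_of_ge (hδ : 0 < δ) (h : δ ≤ t) : cvxF δ t = t := by
  rw [cvxF, cvxClamp_of_ge h hδ, max_eq_left (by linarith), cvxP]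
  field_simp
  ring

lemma cvxF1_of_nonpos (hδ : 0 < δ) (h : t ≤ 0) : cvxF1 δ t = 0 := by
  rw [cvxF1, cvxClamp_of_nonpos h hδ]; simp [cvxP1]

lemma cvxF1_of_mem (h0 : 0 ≤ t) (h1 : t ≤ δ) : cvxF1 δ t = cvxP1 δ t := by
  rw [cvxF1, cvxClamp_of_mem h0 h1]

lemma cvxF1_of_ge (hδ : 0 < δ) (h : δ ≤ t) : cvxF1 δ t = 1 := by
  rw [cvxF1, cvxClamp_of_ge h hδ, cvxP1]
  field_simp
  ring

lemma cvxF2_of_nonpos (hδ : 0 < δ) (h : t ≤ 0) : cvxF2 δ t = 0 := by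
  rw [cvxF2, cvxClamp_of_nonpos h hδ]; simp [cvxP2]

lemma cvxF2_of_mem (h0 : 0 ≤ t) (h1 : t ≤ δ) : cvxF2 δ t = cvxP2 δ t := by
  rw [cvxF2, cvxClamp_of_mem h0 h1]

lemma cvxF2_of_ge (hδ : 0 < δ) (h : δ ≤ t) : cvxF2 δ t = 0 := by
  rw [cvxF2, cvxClamp_of_ge h hδ, cvxP2]
  field_simp
  ring

lemma cvxF1_nonneg (hδ : 0 < δ) : 0 ≤ cvxF1 δ t := by
  have h0 : 0 ≤ cvxClamp δ t := cvxClamp_nonneg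
  have h1 : cvxClamp δ t ≤ δ := cvxClamp_le hδ
  rw [cvxF1, cvxP1]
  set u := cvxClamp δ t
  rw [div_sub_div _ _ (by positivity) (by positivity)]
  apply div_nonneg _ (by positivity)
  nlinarith [mul_nonneg (mul_nonneg (sq_nonneg u) (sq_nonneg δ)) (by linarith : (0:ℝ) ≤ 3*δ - 2*u)]

lemma cvxF2_nonneg (hδ : 0 < δ) : 0 ≤ cvxF2 δ t := by
  have h0 : 0 ≤ cvxClamp δ t := cvxClamp_nonneg
  have h1 : cvxClamp δ t ≤ δ := cvxClamp_le hδ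
  rw [cvxF2, cvxP2]
  set u := cvxClamp δ t
  rw [div_sub_div _ _ (by positivity) (by positivity)]
  apply div_nonneg _ (by positivity)
  nlinarith [mul_nonneg (mul_nonneg h0 (sq_nonneg δ)) (by linarith : (0:ℝ) ≤ δ - u)]

lemma cvxF_ge_half (hδ : 0 < δ) : δ/2 ≤ cvxF δ t := by
  have h0 : 0 ≤ cvxClamp δ t := cvxClamp_nonneg
  have h1 : cvxClamp δ t ≤ δ := cvxClamp_le hδ
  have h2 : (0:ℝ) ≤ max (t - δ) 0 := le_max_right _ _
  rw [cvxF, cvxP]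
  set u := cvxClamp δ t
  have : 0 ≤ u^3/δ^2 - u^4/(2*δ^3) := by
    rw [div_sub_div _ _ (by positivity) (by positivity)]
    apply div_nonneg _ (by positivity)
    nlinarith [mul_nonneg (mul_nonneg (pow_nonneg h0 3) (sq_nonneg δ)) (by linarith : (0:ℝ) ≤ 2*δ - u)]
  linarith

lemma cvxF_ge_self (hδ : 0 < δ) : t ≤ cvxF δ t := by
  rcases le_or_gt t 0 with h | h
  · rw [cvxF_of_nonpos hδ h]; linarith
  rcases le_or_gt t δ with h1 | h1
  · rw [cvxF_of_mem hδ h.le h1, cvxP]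
    have key : cvxP δ t - t = (δ - t)^3 * (δ + t) / (2*δ^3) := by
      rw [cvxP]; field_simp; ring
    have : 0 ≤ (δ - t)^3 * (δ + t) / (2*δ^3) :=
      div_nonneg (mul_nonneg (pow_nonneg (by linarith) 3) (by linarith)) (by positivity)
    rw [cvxP] at key; linarith
  · rw [cvxF_of_ge hδ h1.le]

lemma hasDerivAt_cvxP (hδ : 0 < δ) (t : ℝ) : HasDerivAt (cvxP δ) (cvxP1 δ t) t := by
  have h : HasDerivAt (fun t : ℝ => δ/2 + t^3/δ^2 - t^4/(2*δ^3))
      ((3:ℕ)*t^(3-1)/δ^2 - (4:ℕ)*t^(4-1)/(2*δ^3)) t := by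
    exact (((hasDerivAt_pow 3 t).div_const (δ^2)).const_add (δ/2)).sub
      ((hasDerivAt_pow 4 t).div_const (2*δ^3))
  convert h using 1
  · rfl
  rw [cvxP1]
  push_cast
  field_simp
  ring

lemma hasDerivAt_cvxP1 (hδ : 0 < δ) (t : ℝ) : HasDerivAt (cvxP1 δ) (cvxP2 δ t) t := by
  have h : HasDerivAt (fun t : ℝ => 3*t^2/δ^2 - 2*t^3/δ^3)
      (3*((2:ℕ)*t^(2-1))/δ^2 - 2*((3:ℕ)*t^(3-1))/δ^3) t := by
    exact (((hasDerivAt_pow 2 t).const_mul 3).div_const (δ^2)).sub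
      (((hasDerivAt_pow 3 t).const_mul 2).div_const (δ^3))
  convert h using 1
  · rfl
  rw [cvxP2]
  push_cast
  field_simp
  ring

lemma hasDerivAt_cvxF (hδ : 0 < δ) (t : ℝ) : HasDerivAt (cvxF δ) (cvxF1 δ t) t := by
  rcases lt_trichotomy t 0 with h | rfl | h
  · have he : cvxF δ =ᶠ[nhds t] fun _ => δ/2 := by
      filter_upwards [Iio_mem_nhds h] with y (hy : y < 0)
      exact cvxF_of_nonpos hδ hy.le
    rw [cvxF1_of_nonpos hδ h.le]
    exact (hasDerivAt_const t (δ/2)).congr_of_eventuallyEq he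
  · -- junction at 0
    have hL : HasDerivWithinAt (cvxF δ) (cvxF1 δ 0) (Iic 0) 0 := by
      rw [cvxF1_of_nonpos hδ le_rfl]
      exact (hasDerivWithinAt_const 0 _ (δ/2)).congr
        (fun y hy => cvxF_of_nonpos hδ hy) (cvxF_of_nonpos hδ le_rfl)
    have hR : HasDerivWithinAt (cvxF δ) (cvxF1 δ 0) (Ici 0) 0 := by
      have he : cvxF δ =ᶠ[nhdsWithin 0 (Ici 0)] cvxP δ := by
        filter_upwards [inter_mem self_mem_nhdsWithin
          (mem_nhdsWithin_of_mem_nhds (Iio_mem_nhds hδ))] with y hy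
        exact cvxF_of_mem hδ hy.1 hy.2.le
      have h0 : cvxF1 δ 0 = cvxP1 δ 0 := cvxF1_of_mem le_rfl hδ.le
      rw [h0]
      exact ((hasDerivAt_cvxP hδ 0).hasDerivWithinAt).congr_of_eventuallyEq he
        (cvxF_of_mem hδ le_rfl hδ.le)
    have := hL.union hR
    rw [Iic_union_Ici, hasDerivWithinAt_univ] at this
    exact this
  rcases lt_trichotomy t δ with h1 | heq | h1
  · have he : cvxF δ =ᶠ[nhds t] cvxP δ := by
      filter_upwards [Ioo_mem_nhds h h1] with y hy
      exact cvxF_of_mem hδ hy.1.le hy.2.le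
    rw [cvxF1_of_mem h.le h1.le]
    exact ((hasDerivAt_cvxP hδ t)).congr_of_eventuallyEq he
  · -- junction at δ
    rw [heq]
    have hL : HasDerivWithinAt (cvxF δ) (cvxF1 δ δ) (Iic δ) δ := by
      have he : cvxF δ =ᶠ[nhdsWithin δ (Iic δ)] cvxP δ := by
        filter_upwards [inter_mem self_mem_nhdsWithin
          (mem_nhdsWithin_of_mem_nhds (Ioi_mem_nhds hδ))] with y hy
        exact cvxF_of_mem hδ hy.2.le hy.1
      rw [cvxF1_of_mem hδ.le le_rfl]
      exact ((hasDerivAt_cvxP hδ δ).hasDerivWithinAt).congr_of_eventuallyEq he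
        (cvxF_of_mem hδ hδ.le le_rfl)
    have hR : HasDerivWithinAt (cvxF δ) (cvxF1 δ δ) (Ici δ) δ := by
      rw [cvxF1_of_ge hδ le_rfl]
      exact (hasDerivWithinAt_id δ _).congr
        (fun y hy => cvxF_of_ge hδ hy) (cvxF_of_ge hδ le_rfl)
    have := hL.union hR
    rw [Iic_union_Ici, hasDerivWithinAt_univ] at this
    exact this
  · have he : cvxF δ =ᶠ[nhds t] id := by
      filter_upwards [Ioi_mem_nhds h1] with y (hy : δ < y)
      exact cvxF_of_ge hδ hy.le
    rw [cvxF1_of_ge hδ h1.le]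
    exact (hasDerivAt_id t).congr_of_eventuallyEq he

lemma hasDerivAt_cvxF1 (hδ : 0 < δ) (t : ℝ) : HasDerivAt (cvxF1 δ) (cvxF2 δ t) t := by
  rcases lt_trichotomy t 0 with h | rfl | h
  · have he : cvxF1 δ =ᶠ[nhds t] fun _ => (0:ℝ) := by
      filter_upwards [Iio_mem_nhds h] with y (hy : y < 0)
      exact cvxF1_of_nonpos hδ hy.le
    rw [cvxF2_of_nonpos hδ h.le]
    exact (hasDerivAt_const t 0).congr_of_eventuallyEq he
  · have hL : HasDerivWithinAt (cvxF1 δ) (cvxF2 δ 0) (Iic 0) 0 := by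
      rw [cvxF2_of_nonpos hδ le_rfl]
      exact (hasDerivWithinAt_const 0 _ (0:ℝ)).congr
        (fun y hy => cvxF1_of_nonpos hδ hy) (cvxF1_of_nonpos hδ le_rfl)
    have hR : HasDerivWithinAt (cvxF1 δ) (cvxF2 δ 0) (Ici 0) 0 := by
      have he : cvxF1 δ =ᶠ[nhdsWithin 0 (Ici 0)] cvxP1 δ := by
        filter_upwards [inter_mem self_mem_nhdsWithin
          (mem_nhdsWithin_of_mem_nhds (Iio_mem_nhds hδ))] with y hy
        exact cvxF1_of_mem hy.1 hy.2.le
      rw [cvxF2_of_mem le_rfl hδ.le]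
      exact ((hasDerivAt_cvxP1 hδ 0).hasDerivWithinAt).congr_of_eventuallyEq he
        (cvxF1_of_mem le_rfl hδ.le)
    have := hL.union hR
    rw [Iic_union_Ici, hasDerivWithinAt_univ] at this
    exact this
  rcases lt_trichotomy t δ with h1 | heq | h1
  · have he : cvxF1 δ =ᶠ[nhds t] cvxP1 δ := by
      filter_upwards [Ioo_mem_nhds h h1] with y hy
      exact cvxF1_of_mem hy.1.le hy.2.le
    rw [cvxF2_of_mem h.le h1.le]
    exact (hasDerivAt_cvxP1 hδ t).congr_of_eventuallyEq he
  · rw [heq]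
    have hL : HasDerivWithinAt (cvxF1 δ) (cvxF2 δ δ) (Iic δ) δ := by
      have he : cvxF1 δ =ᶠ[nhdsWithin δ (Iic δ)] cvxP1 δ := by
        filter_upwards [inter_mem self_mem_nhdsWithin
          (mem_nhdsWithin_of_mem_nhds (Ioi_mem_nhds hδ))] with y hy
        exact cvxF1_of_mem hy.2.le hy.1
      rw [cvxF2_of_mem hδ.le le_rfl]
      exact ((hasDerivAt_cvxP1 hδ δ).hasDerivWithinAt).congr_of_eventuallyEq he
        (cvxF1_of_mem hδ.le le_rfl)
    have hR : HasDerivWithinAt (cvxF1 δ) (cvxF2 δ δ) (Ici δ) δ := by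
      rw [cvxF2_of_ge hδ le_rfl]
      exact (hasDerivWithinAt_const δ _ (1:ℝ)).congr
        (fun y hy => cvxF1_of_ge hδ hy) (cvxF1_of_ge hδ le_rfl)
    have := hL.union hR
    rw [Iic_union_Ici, hasDerivWithinAt_univ] at this
    exact this
  · have he : cvxF1 δ =ᶠ[nhds t] fun _ => (1:ℝ) := by
      filter_upwards [Ioi_mem_nhds h1] with y (hy : δ < y)
      exact cvxF1_of_ge hδ hy.le
    rw [cvxF2_of_ge hδ h1.le]
    exact (hasDerivAt_const t 1).congr_of_eventuallyEq he

lemma continuous_cvxF2 (hδ : 0 < δ) : Continuous (cvxF2 δ) := by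
  have hc : Continuous (cvxClamp δ) :=
    continuous_const.max (continuous_id.min continuous_const)
  have : Continuous (cvxP2 δ) := by
    unfold cvxP2; fun_prop
  exact this.comp hc

lemma contDiff_cvxF (hδ : 0 < δ) : ContDiff ℝ 2 (cvxF δ) := by
  have hd : deriv (cvxF δ) = cvxF1 δ := funext fun t => (hasDerivAt_cvxF hδ t).deriv
  have hd1 : deriv (cvxF1 δ) = cvxF2 δ := funext fun t => (hasDerivAt_cvxF1 hδ t).deriv
  rw [show (2 : WithTop ℕ∞) = 1 + 1 from rfl, contDiff_succ_iff_deriv]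
  refine ⟨fun t => (hasDerivAt_cvxF hδ t).differentiableAt, by simp, ?_⟩
  rw [hd, show (1 : WithTop ℕ∞) = 0 + 1 from rfl, contDiff_succ_iff_deriv]
  refine ⟨fun t => (hasDerivAt_cvxF1 hδ t).differentiableAt, by simp, ?_⟩
  rw [hd1, contDiff_zero]
  exact continuous_cvxF2 hδ

section
variable {f₁ f : ℝ → ℝ} {s : Set ℝ} {x : ℝ}

lemma iteratedDerivWithin_congr_of_eventuallyEq (n : ℕ) (h : f₁ =ᶠ[nhdsWithin x s] f)
    (hx : f₁ x = f x) : iteratedDerivWithin n f₁ s x = iteratedDerivWithin n f s x := by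
  simp only [iteratedDerivWithin, h.iteratedFDerivWithin_eq hx n]
end

/-- Convexification lemma: given `g ∈ C²([0,1])` with `g(X), g(Y) > 0` and `g'' > 0`
on `[X,Y]`, there is `ḡ ∈ C²([0,1])` equal to `g` outside `(X,Y)`, and `≥ g`,
positive and convex (`ḡ'' ≥ 0`) on `[X,Y]`. -/
theorem convexification_lemma (X Y : ℝ) (hX : 0 < X) (hXY : X < Y) (hY : Y < 1)
    (g : ℝ → ℝ) (hg : ContDiffOn ℝ 2 g (Set.Icc 0 1))
    (hgX : 0 < g X) (hgY : 0 < g Y)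
    (hconv : ∀ x ∈ Set.Icc X Y, 0 < iteratedDerivWithin 2 g (Set.Icc 0 1) x) :
    ∃ gbar : ℝ → ℝ, ContDiffOn ℝ 2 gbar (Set.Icc 0 1) ∧
      Set.EqOn gbar g (Set.Icc 0 X ∪ Set.Icc Y 1) ∧
      (∀ x ∈ Set.Icc X Y, g x ≤ gbar x) ∧
      (∀ x ∈ Set.Icc X Y, 0 < gbar x) ∧
      (∀ x ∈ Set.Icc X Y, 0 ≤ iteratedDerivWithin 2 gbar (Set.Icc 0 1) x) := by
  set s : Set ℝ := Set.Icc 0 1 with hs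
  have husd : UniqueDiffOn ℝ s := uniqueDiffOn_Icc one_pos
  set δ : ℝ := min (g X) (g Y) / 2 with hδdef
  have hδ : 0 < δ := by positivity
  have hδX : δ < g X := by
    have : min (g X) (g Y) ≤ g X := min_le_left _ _
    have h2 : 0 < min (g X) (g Y) := lt_min hgX hgY
    simp only [hδdef]; linarith
  have hδY : δ < g Y := by
    have : min (g X) (g Y) ≤ g Y := min_le_right _ _
    have h2 : 0 < min (g X) (g Y) := lt_min hgX hgY
    simp only [hδdef]; linarith
  have hXYs : Set.Icc X Y ⊆ s := Set.Icc_subset_Icc hX.le hY.le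
  set gbar : ℝ → ℝ := fun x => if x ∈ Set.Icc X Y then cvxF δ (g x) else g x with hgbar
  -- local description of gbar near points of [X, Y]
  have hloc : ∀ x ∈ Set.Icc X Y, gbar =ᶠ[nhdsWithin x s] fun y => cvxF δ (g y) := by
    intro x hx
    rcases lt_or_ge δ (g x) with hgx | hgx
    · have hc : ContinuousWithinAt g s x := (hg.continuousOn).continuousWithinAt (hXYs hx)
      have hev : ∀ᶠ y in nhdsWithin x s, δ < g y := hc.eventually_mem (Ioi_mem_nhds hgx)
      filter_upwards [hev] with y hy
      by_cases hyXY : y ∈ Set.Icc X Y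
      · simp only [hgbar]
        rw [if_pos hyXY]
      · simp only [hgbar]
        rw [if_neg hyXY]
        exact (cvxF_of_ge hδ hy.le).symm
    · have hxX : X < x := by
        rcases eq_or_lt_of_le hx.1 with h | h
        · exfalso; rw [← h] at hgx; linarith
        · exact h
      have hxY : x < Y := by
        rcases eq_or_lt_of_le hx.2 with h | h
        · exfalso; rw [h] at hgx; linarith
        · exact h
      have : Set.Ioo X Y ∈ nhdsWithin x s :=
        mem_nhdsWithin_of_mem_nhds (Ioo_mem_nhds hxX hxY)
      filter_upwards [this] with y hy
      simp only [hgbar]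
      rw [if_pos (Set.mem_Icc.mpr ⟨hy.1.le, hy.2.le⟩)]
  have hgbarXY : ∀ x ∈ Set.Icc X Y, gbar x = cvxF δ (g x) := by
    intro x hx; simp only [hgbar]; rw [if_pos hx]
  refine ⟨gbar, ?_, ?_, ?_, ?_, ?_⟩
  · -- ContDiffOn
    intro x hx
    by_cases hxXY : x ∈ Set.Icc X Y
    · have hFg : ContDiffWithinAt ℝ 2 (fun y => cvxF δ (g y)) s x :=
        (contDiff_cvxF hδ).comp_contDiffWithinAt (hg x hx)
      exact hFg.congr_of_eventuallyEq (hloc x hxXY) (hgbarXY x hxXY)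
    · have hopen : Set.Icc X Y ∉ nhds x := by
        intro hmem
        exact hxXY (mem_of_mem_nhds hmem)
      have hx' : x < X ∨ Y < x := by
        by_contra hcon
        push_neg at hcon
        exact hxXY ⟨hcon.1, hcon.2⟩
      have hev : gbar =ᶠ[nhdsWithin x s] g := by
        have hU : (Set.Iio X ∪ Set.Ioi Y) ∈ nhds x := by
          rcases hx' with h | h
          · exact mem_of_superset (Iio_mem_nhds h) subset_union_left
          · exact mem_of_superset (Ioi_mem_nhds h) subset_union_right
        filter_upwards [mem_nhdsWithin_of_mem_nhds hU] with y hy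
        have : y ∉ Set.Icc X Y := by
          rcases hy with h | h
          · exact fun hc => absurd hc.1 (not_le.mpr h)
          · exact fun hc => absurd hc.2 (not_le.mpr h)
        simp only [hgbar]
        rw [if_neg this]
      have hgx : gbar x = g x := by
        simp only [hgbar]
        rw [if_neg hxXY]
      exact (hg x hx).congr_of_eventuallyEq hev hgx
  · -- EqOn with g outside (X, Y)
    intro x hx
    by_cases hxXY : x ∈ Set.Icc X Y
    · have hXorY : x = X ∨ x = Y := by
        rcases hx with h | h
        · exact Or.inl (le_antisymm h.2 hxXY.1)
        · exact Or.inr (le_antisymm hxXY.2 h.1)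
      have : δ ≤ g x := by
        rcases hXorY with rfl | rfl
        · exact hδX.le
        · exact hδY.le
      simp only [hgbar, if_pos hxXY]
      exact cvxF_of_ge hδ this
    · simp only [hgbar]
      rw [if_neg hxXY]
  · -- gbar ≥ g on [X, Y]
    intro x hx
    rw [hgbarXY x hx]
    exact cvxF_ge_self hδ
  · -- gbar > 0 on [X, Y]
    intro x hx
    rw [hgbarXY x hx]
    have := cvxF_ge_half (t := g x) hδ
    linarith
  · -- second derivative nonneg
    intro x hx
    have hx' : x ∈ s := hXYs hx
    have e2 : iteratedDerivWithin 2 gbar s x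
        = iteratedDerivWithin 2 (fun y => cvxF δ (g y)) s x :=
      iteratedDerivWithin_congr_of_eventuallyEq 2 (hloc x hx) (hgbarXY x hx)
    set G : ℝ → ℝ := derivWithin g s with hG
    have hgd : ∀ y ∈ s, HasDerivWithinAt g (G y) s y := fun y hy =>
      ((hg.differentiableOn (by norm_num)) y hy).hasDerivWithinAt
    have h1 : ∀ y ∈ s, HasDerivWithinAt (fun z => cvxF δ (g z)) (cvxF1 δ (g y) * G y) s y :=
      fun y hy => (hasDerivAt_cvxF hδ (g y)).comp_hasDerivWithinAt y (hgd y hy)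
    have e3 : Set.EqOn (derivWithin (fun z => cvxF δ (g z)) s) (fun y => cvxF1 δ (g y) * G y) s :=
      fun y hy => (h1 y hy).derivWithin (husd y hy)
    have hGc : ContDiffOn ℝ 1 G s := hg.derivWithin husd (by norm_num)
    have hGd : HasDerivWithinAt G (derivWithin G s x) s x :=
      ((hGc.differentiableOn (by norm_num)) x hx').hasDerivWithinAt
    have h2 : HasDerivWithinAt (fun y => cvxF1 δ (g y) * G y)
        (cvxF2 δ (g x) * G x * G x + cvxF1 δ (g x) * derivWithin G s x) s x :=
      HasDerivWithinAt.mul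
        ((hasDerivAt_cvxF1 hδ (g x)).comp_hasDerivWithinAt x (hgd x hx')) hGd
    have e4 : iteratedDerivWithin 2 (fun y => cvxF δ (g y)) s x
        = cvxF2 δ (g x) * G x * G x + cvxF1 δ (g x) * derivWithin G s x := by
      rw [show (2 : ℕ) = 1 + 1 from rfl,
        iteratedDerivWithin_succ]
      have : Set.EqOn (iteratedDerivWithin 1 (fun z => cvxF δ (g z)) s)
          (fun y => cvxF1 δ (g y) * G y) s := by
        intro y hy
        rw [iteratedDerivWithin_one]
        exact e3 hy
      rw [derivWithin_congr this (this hx')]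
      exact h2.derivWithin (husd x hx')
    have e5 : derivWithin G s x = iteratedDerivWithin 2 g s x := by
      rw [show (2 : ℕ) = 1 + 1 from rfl,
        iteratedDerivWithin_succ]
      refine (derivWithin_congr ?_ ?_).symm
      · intro y hy
        exact congrFun iteratedDerivWithin_one y
      · exact congrFun iteratedDerivWithin_one x
    rw [e2, e4, e5]
    have hF1 : 0 ≤ cvxF1 δ (g x) := cvxF1_nonneg hδ
    have hF2 : 0 ≤ cvxF2 δ (g x) := cvxF2_nonneg hδ
    have hgg : 0 ≤ iteratedDerivWithin 2 g s x := (hconv x hx).le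
    have hsq : 0 ≤ G x * G x := mul_self_nonneg _
    have := mul_nonneg hF2 hsq
    have := mul_nonneg hF1 hgg
    nlinarith [mul_nonneg hF2 hsq, mul_nonneg hF1 hgg]
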